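/- With A, C, S, R as in the CSR construction (λ(A) = 1) and P^(t) := C ⊗ S^t ⊗ R, one has the group law P^(t₁+t₂) = P^(t₁) ⊗ P^(t₂) for all t₁, t₂ ≥ 0. Consequently the matrices {P^(0), P^(1), …, P^(γ−1)} form a cyclic group of order dividing γ under max-algebraic multiplication, with identity P^(0) = C ⊗ R. -/

import Mathlib

open scoped NNReal Classical

namespace MaxAlg

/-- Max-times matrix product over `ℝ≥0`. -/
noncomputable def mmul {n : ℕ} (A B : Fin n → Fin n → ℝ≥0) : Fin n → Fin n → ℝ≥0 :=
  fun i j => Finset.univ.sup fun k => A i k * B k j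

/-- Max-algebraic powers of a matrix, with `mpow A 0` the identity. -/
noncomputable def mpow {n : ℕ} (A : Fin n → Fin n → ℝ≥0) : ℕ → (Fin n → Fin n → ℝ≥0)
  | 0 => fun i j => if i = j then 1 else 0
  | (k+1) => mmul A (mpow A k)

/-- Weight of a walk `p` of length `k` (product of the edge weights). -/
noncomputable def pathWeight {n : ℕ} (A : Fin n → Fin n → ℝ≥0) (k : ℕ)
    (p : Fin (k+1) → Fin n) : ℝ≥0 :=
  ∏ t : Fin k, A (p t.castSucc) (p t.succ)

/-- `p` is a walk in the edge relation `E`. -/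
def IsEPath {n : ℕ} (E : Fin n → Fin n → Prop) (k : ℕ) (p : Fin (k+1) → Fin n) : Prop :=
  ∀ t : Fin k, E (p t.castSucc) (p t.succ)

/-- `j` is reachable from `i` in `E` (possibly by the empty path). -/
def Reach {n : ℕ} (E : Fin n → Fin n → Prop) (i j : Fin n) : Prop :=
  ∃ k, ∃ p : Fin (k+1) → Fin n, IsEPath E k p ∧ p 0 = i ∧ p (Fin.last k) = j

/-- Edge relation of the digraph associated with a nonnegative matrix. -/
def edges {n : ℕ} (A : Fin n → Fin n → ℝ≥0) (i j : Fin n) : Prop := A i j ≠ 0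

/-- Lengths of (positive-length) closed walks through `i` in `E`. -/
def cycLen {n : ℕ} (E : Fin n → Fin n → Prop) (i : Fin n) : Set ℕ :=
  {k | 0 < k ∧ ∃ p : Fin (k+1) → Fin n, IsEPath E k p ∧ p 0 = i ∧ p (Fin.last k) = i}

/-- Lengths of all closed walks in `E`. -/
def allCycLen {n : ℕ} (E : Fin n → Fin n → Prop) : Set ℕ :=
  {k | ∃ i, k ∈ cycLen E i}

/-- The gcd of a set of naturals, characterized by the gcd property. -/
noncomputable def setGcd (S : Set ℕ) : ℕ :=
  sInf {d | (∀ s ∈ S, d ∣ s) ∧ ∀ e : ℕ, (∀ s ∈ S, e ∣ s) → e ∣ d}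

/-- Cyclicity of a (completely reducible) digraph: lcm over the nodes of the
gcd of the cycle lengths through that node. -/
noncomputable def graphCyc {n : ℕ} (E : Fin n → Fin n → Prop) : ℕ :=
  Finset.univ.lcm fun i => if (cycLen E i).Nonempty then setGcd (cycLen E i) else 1

/-- The maximum cycle geometric mean `λ(A)`. -/
noncomputable def mcgm {n : ℕ} (A : Fin n → Fin n → ℝ≥0) : ℝ≥0 :=
  sSup {x | ∃ k : ℕ, 0 < k ∧ k ≤ n ∧ ∃ p : Fin (k+1) → Fin n,
    p 0 = p (Fin.last k) ∧ x = pathWeight A k p ^ ((1 : ℝ) / (k : ℝ))}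

/-- The Kleene star `A* = I ⊕ A ⊕ A² ⊕ ⋯` (entrywise supremum of all powers). -/
noncomputable def kleeneStar {n : ℕ} (A : Fin n → Fin n → ℝ≥0) : Fin n → Fin n → ℝ≥0 :=
  fun i j => ⨆ k : ℕ, mpow A k i j

/-- `(i,j)` is a critical edge: it lies on a cycle attaining `λ(A)`. -/
def IsCriticalEdge {n : ℕ} (A : Fin n → Fin n → ℝ≥0) (i j : Fin n) : Prop :=
  ∃ k : ℕ, 0 < k ∧ k ≤ n ∧ ∃ p : Fin (k+1) → Fin n, p 0 = p (Fin.last k) ∧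
    pathWeight A k p ^ ((1 : ℝ) / (k : ℝ)) = mcgm A ∧
    ∃ t : Fin k, p t.castSucc = i ∧ p t.succ = j

/-- A node lying on a critical cycle of `A`. -/
def IsCriticalNode {n : ℕ} (A : Fin n → Fin n → ℝ≥0) (i : Fin n) : Prop :=
  (∃ j, IsCriticalEdge A i j) ∨ (∃ j, IsCriticalEdge A j i)

/-- A completely reducible subgraph of the critical graph of `A`:
every edge is critical, and every edge can be completed to a cycle of the
subgraph (so each weakly connected part is strongly connected). -/
structure CritSubgraph {n : ℕ} (A : Fin n → Fin n → ℝ≥0) where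
  E : Fin n → Fin n → Prop
  critical : ∀ i j, E i j → IsCriticalEdge A i j
  reducible : ∀ i j, E i j → ∃ k, ∃ p : Fin (k+1) → Fin n,
    IsEPath E k p ∧ p 0 = j ∧ p (Fin.last k) = i

/-- Node set `N_c` of the subgraph. -/
def CritSubgraph.Nc {n : ℕ} {A : Fin n → Fin n → ℝ≥0} (G : CritSubgraph A) (i : Fin n) : Prop :=
  (∃ j, G.E i j) ∨ (∃ j, G.E j i)

/-- The matrix `C`: columns of `(A^γ)*` with indices in `N_c`, other columns zero. -/
noncomputable def Cmat {n : ℕ} (A : Fin n → Fin n → ℝ≥0) (G : CritSubgraph A) :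
    Fin n → Fin n → ℝ≥0 :=
  fun i j => if G.Nc j then kleeneStar (mpow A (graphCyc G.E)) i j else 0

/-- The matrix `R`: rows of `(A^γ)*` with indices in `N_c`, other rows zero. -/
noncomputable def Rmat {n : ℕ} (A : Fin n → Fin n → ℝ≥0) (G : CritSubgraph A) :
    Fin n → Fin n → ℝ≥0 :=
  fun i j => if G.Nc i then kleeneStar (mpow A (graphCyc G.E)) i j else 0

/-- The matrix `S`: the restriction of `A` to the edges of the subgraph. -/
noncomputable def Smat {n : ℕ} (A : Fin n → Fin n → ℝ≥0) (G : CritSubgraph A) :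
    Fin n → Fin n → ℝ≥0 :=
  fun i j => if G.E i j then A i j else 0

/-- The CSR product `P^(t) = C ⊗ S^t ⊗ R`. -/
noncomputable def csr {n : ℕ} (A : Fin n → Fin n → ℝ≥0) (G : CritSubgraph A) (t : ℕ) :
    Fin n → Fin n → ℝ≥0 :=
  mmul (mmul (Cmat A G) (mpow (Smat A G) t)) (Rmat A G)

/-- The strongly connected component (as a node set) of `i` in `E`. -/
def scc {n : ℕ} (E : Fin n → Fin n → Prop) (i : Fin n) : Set (Fin n) :=
  {j | Reach E i j ∧ Reach E j i}

/-- The principal submatrix of `A` on the strongly connected component of `i`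
in `D(A)` (other entries zero). -/
noncomputable def compMat {n : ℕ} (A : Fin n → Fin n → ℝ≥0) (i : Fin n) :
    Fin n → Fin n → ℝ≥0 :=
  fun a b => if a ∈ scc (edges A) i ∧ b ∈ scc (edges A) i then A a b else 0

/-- `λ(i)`: the m.c.g.m. of the component of `D(A)` containing `i`. -/
noncomputable def lamNode {n : ℕ} (A : Fin n → Fin n → ℝ≥0) (i : Fin n) : ℝ≥0 :=
  mcgm (compMat A i)

/-- `i` belongs to a nontrivial component of `D(A)` (it lies on a cycle). -/
def Nontrivial' {n : ℕ} (A : Fin n → Fin n → ℝ≥0) (i : Fin n) : Prop :=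
  (cycLen (edges A) i).Nonempty

/-- `γ`: the lcm of the cyclicities of the critical graphs of the nontrivial
components of `D(A)`. -/
noncomputable def gammaU {n : ℕ} (A : Fin n → Fin n → ℝ≥0) : ℕ :=
  Finset.univ.lcm fun i =>
    if Nontrivial' A i then graphCyc (IsCriticalEdge (compMat A i)) else 1

/-- Max-times matrix-vector product. -/
noncomputable def mvec {n : ℕ} (M : Fin n → Fin n → ℝ≥0) (y : Fin n → ℝ≥0) :
    Fin n → ℝ≥0 :=
  fun a => Finset.univ.sup fun k => M a k * y k

/-- `i` strongly accesses `j`: paths of every sufficiently large length exist. -/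
def StrongAccess {n : ℕ} (E : Fin n → Fin n → Prop) (i j : Fin n) : Prop :=
  ∃ T, ∀ t ≥ T, ∃ p : Fin (t+1) → Fin n, IsEPath E t p ∧ p 0 = i ∧ p (Fin.last t) = j

section walkbasics

variable {n : ℕ}

/-- weight of an `ℕ`-indexed walk of length `k` -/
noncomputable def wgt (A : Fin n → Fin n → ℝ≥0) (k : ℕ) (p : ℕ → Fin n) : ℝ≥0 :=
  ∏ t ∈ Finset.range k, A (p t) (p (t + 1))

lemma wgt_split (A : Fin n → Fin n → ℝ≥0) (a b : ℕ) (p : ℕ → Fin n) :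
    wgt A (a + b) p = wgt A a p * wgt A b (fun s => p (a + s)) := by
  unfold wgt
  rw [Finset.prod_range_add]
  rfl

/-- concatenation of walks -/
def cat (k : ℕ) (p q : ℕ → Fin n) : ℕ → Fin n :=
  fun s => if s ≤ k then p s else q (s - k)

lemma cat_left (k : ℕ) (p q : ℕ → Fin n) (s : ℕ) (h : s ≤ k) : cat k p q s = p s := if_pos h

lemma cat_right (k : ℕ) (p q : ℕ → Fin n) (h : p k = q 0) (s : ℕ) : cat k p q (k + s) = q s := by
  rcases Nat.eq_zero_or_pos s with rfl | hs
  · simpa [cat] using h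
  · have hn : ¬ (k + s ≤ k) := by omega
    simp only [cat, if_neg hn]
    congr 1
    omega

lemma wgt_cat (A : Fin n → Fin n → ℝ≥0) (k m : ℕ) (p q : ℕ → Fin n) (h : p k = q 0) :
    wgt A (k + m) (cat k p q) = wgt A k p * wgt A m q := by
  rw [wgt_split]
  congr 1
  · refine Finset.prod_congr rfl fun t ht => ?_
    have ht' := Finset.mem_range.mp ht
    rw [cat_left k p q t (by omega), cat_left k p q (t+1) (by omega)]
  · refine Finset.prod_congr rfl fun t _ => ?_
    show A (cat k p q (k + t)) (cat k p q (k + (t + 1))) = A (q t) (q (t + 1))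
    rw [cat_right k p q h t, cat_right k p q h (t+1)]

lemma walk_le_mpow (A : Fin n → Fin n → ℝ≥0) : ∀ (k : ℕ) (p : ℕ → Fin n),
    wgt A k p ≤ mpow A k (p 0) (p k) := by
  intro k
  induction k with
  | zero => intro p; simp [wgt, mpow]
  | succ k ih =>
    intro p
    have h1 : wgt A (k+1) p = A (p 0) (p 1) * wgt A k (fun s => p (1 + s)) := by
      rw [show k+1 = 1+k by omega, wgt_split]
      congr 1
      simp [wgt]
    rw [h1]
    have h2 : A (p 0) (p 1) * wgt A k (fun s => p (1 + s))
        ≤ A (p 0) (p 1) * mpow A k (p 1) (p (1 + k)) :=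
      mul_le_mul_right (ih (fun s => p (1 + s))) _
    refine h2.trans ?_
    rw [show p (k+1) = p (1+k) by rw [Nat.add_comm]]
    show A (p 0) (p 1) * mpow A k (p 1) (p (1+k)) ≤ (Finset.univ : Finset (Fin n)).sup fun m => A (p 0) m * mpow A k m (p (1+k))
    exact Finset.le_sup (f := fun m => A (p 0) m * mpow A k m (p (1 + k))) (Finset.mem_univ (p 1))

lemma mpow_exists (A : Fin n → Fin n → ℝ≥0) : ∀ (k : ℕ) (i j : Fin n),
    mpow A k i j = 0 ∨ ∃ p : ℕ → Fin n, p 0 = i ∧ p k = j ∧ wgt A k p = mpow A k i j := by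
  intro k
  induction k with
  | zero =>
    intro i j
    by_cases h : i = j
    · subst h; right; exact ⟨fun _ => i, rfl, rfl, by simp [wgt, mpow]⟩
    · left; simp [mpow, h]
  | succ k ih =>
    intro i j
    obtain ⟨m, -, hm⟩ := Finset.exists_mem_eq_sup (Finset.univ : Finset (Fin n))
      ⟨i, Finset.mem_univ i⟩ (fun m => A i m * mpow A k m j)
    have hkey : mpow A (k+1) i j = A i m * mpow A k m j := hm
    rcases ih m j with h0 | ⟨p, hp0, hpk, hw⟩
    · left; rw [hkey, h0, mul_zero]
    · right
      refine ⟨fun t => if t = 0 then i else p (t - 1), by simp, ?_, ?_⟩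
      · simp only [Nat.succ_ne_zero, if_false]
        rw [Nat.add_sub_cancel]; exact hpk
      · unfold wgt
        rw [Finset.prod_range_succ']
        have hfirst : (fun t => if t = 0 then i else p (t - 1)) 0 = i := by simp
        have h2 : ∀ t ∈ Finset.range k,
            A ((fun t => if t = 0 then i else p (t - 1)) (t+1))
              ((fun t => if t = 0 then i else p (t - 1)) (t+1+1))
            = A (p t) (p (t+1)) := by
          intro t _
          simp only [Nat.succ_ne_zero, if_false, Nat.add_sub_cancel]
        rw [Finset.prod_congr rfl h2, hfirst]
        simp only [Nat.succ_ne_zero, if_false]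
        rw [show (0:ℕ) + 1 - 1 = 0 by omega, hp0]
        rw [show (∏ t ∈ Finset.range k, A (p t) (p (t+1))) = wgt A k p from rfl, hw, hkey]
        ring

end walkbasics
section algebrabasics

variable {n : ℕ}

lemma fsup_mul {α : Type*} (s : Finset α) (f : α → ℝ≥0) (a : ℝ≥0) :
    s.sup f * a = s.sup fun b => f b * a := by
  induction s using Finset.cons_induction with
  | empty => simp
  | cons x s hx ih =>
    rw [Finset.sup_cons, Finset.sup_cons, ← ih]
    have hmono : Monotone (fun y : ℝ≥0 => y * a) := fun u v h => mul_le_mul_left h a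
    exact hmono.map_max

lemma mul_fsup {α : Type*} (s : Finset α) (f : α → ℝ≥0) (a : ℝ≥0) :
    a * s.sup f = s.sup fun b => a * f b := by
  rw [mul_comm, fsup_mul]
  simp [mul_comm]

lemma mmul_assoc (A B C : Fin n → Fin n → ℝ≥0) :
    mmul (mmul A B) C = mmul A (mmul B C) := by
  funext i j
  show (Finset.univ.sup fun k => (Finset.univ.sup fun m => A i m * B m k) * C k j)
      = Finset.univ.sup fun m => A i m * (Finset.univ.sup fun k => B m k * C k j)
  simp only [fsup_mul, mul_fsup]
  rw [Finset.sup_comm]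
  simp only [mul_assoc]

lemma one_mmul (A B : Fin n → Fin n → ℝ≥0) : mmul (mpow A 0) B = B := by
  funext i j
  apply le_antisymm
  · refine Finset.sup_le fun k _ => ?_
    show (if i = k then (1:ℝ≥0) else 0) * B k j ≤ B i j
    by_cases h : i = k
    · simp [h]
    · simp [h]
  · show B i j ≤ (Finset.univ : Finset (Fin n)).sup fun k => mpow A 0 i k * B k j
    have : B i j = (if i = i then (1:ℝ≥0) else 0) * B i j := by simp
    conv_lhs => rw [this]
    exact Finset.le_sup (f := fun k => mpow A 0 i k * B k j) (Finset.mem_univ i)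

lemma mpow_one (A : Fin n → Fin n → ℝ≥0) : mpow A 1 = A := by
  funext i j
  apply le_antisymm
  · show (Finset.univ : Finset (Fin n)).sup (fun k => A i k * mpow A 0 k j) ≤ A i j
    refine Finset.sup_le fun k _ => ?_
    show A i k * (if k = j then (1:ℝ≥0) else 0) ≤ A i j
    by_cases h : k = j
    · simp [h]
    · simp [h]
  · show A i j ≤ (Finset.univ : Finset (Fin n)).sup fun k => A i k * mpow A 0 k j
    have : A i j = A i j * (if j = j then (1:ℝ≥0) else 0) := by simp
    conv_lhs => rw [this]
    exact Finset.le_sup (f := fun k => A i k * mpow A 0 k j) (Finset.mem_univ j)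

lemma mpow_add (A : Fin n → Fin n → ℝ≥0) (a b : ℕ) :
    mpow A (a + b) = mmul (mpow A a) (mpow A b) := by
  induction a with
  | zero => rw [Nat.zero_add, one_mmul]
  | succ a ih =>
    rw [show a + 1 + b = (a + b) + 1 by omega]
    show mmul A (mpow A (a + b)) = _
    rw [ih, ← mmul_assoc]
    rfl

lemma mpow_succ_right (A : Fin n → Fin n → ℝ≥0) (k : ℕ) :
    mpow A (k + 1) = mmul (mpow A k) A := by
  rw [mpow_add, mpow_one]

lemma mpow_mul (A : Fin n → Fin n → ℝ≥0) (c : ℕ) : ∀ m : ℕ,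
    mpow (mpow A c) m = mpow A (c * m) := by
  intro m
  induction m with
  | zero => rw [Nat.mul_zero]; rfl
  | succ m ih =>
    show mmul (mpow A c) (mpow (mpow A c) m) = _
    rw [ih, ← mpow_add, show c + c * m = c * (m+1) by ring]

lemma isup_mul_le {f : ℕ → ℝ≥0} {a c : ℝ≥0} (h : ∀ u, f u * a ≤ c) :
    (⨆ u, f u) * a ≤ c := by
  rcases eq_or_ne a 0 with rfl | ha
  · simp
  · have hf : ∀ u, f u ≤ c / a := fun u => (le_div_iff₀ (pos_iff_ne_zero.mpr ha)).mpr (h u)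
    calc (⨆ u, f u) * a ≤ (c / a) * a := mul_le_mul_left (ciSup_le hf) a
      _ = c := div_mul_cancel₀ c ha

end algebrabasics
section walkconv

variable {n : ℕ}

/-- convert a `Fin`-indexed path to an `ℕ`-indexed walk -/
noncomputable def ofFin {k : ℕ} (p : Fin (k+1) → Fin n) : ℕ → Fin n :=
  fun t => p ⟨min t k, Nat.lt_succ_of_le (Nat.min_le_right t k)⟩

lemma ofFin_eq {k : ℕ} (p : Fin (k+1) → Fin n) (t : ℕ) (h : t ≤ k) :
    ofFin p t = p ⟨t, Nat.lt_succ_of_le h⟩ := by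
  unfold ofFin
  congr 1
  exact Fin.ext (by simp [Nat.min_eq_left h])

lemma ofFin_zero {k : ℕ} (p : Fin (k+1) → Fin n) : ofFin p 0 = p 0 := by
  rw [ofFin_eq p 0 (Nat.zero_le k)]
  exact congrArg p (Fin.ext rfl)

lemma ofFin_last {k : ℕ} (p : Fin (k+1) → Fin n) : ofFin p k = p (Fin.last k) := by
  rw [ofFin_eq p k le_rfl]
  exact congrArg p (Fin.ext rfl)

lemma wgt_ofFin (A : Fin n → Fin n → ℝ≥0) {k : ℕ} (p : Fin (k+1) → Fin n) :
    wgt A k (ofFin p) = pathWeight A k p := by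
  unfold wgt pathWeight
  rw [← Fin.prod_univ_eq_prod_range (fun t => A (ofFin p t) (ofFin p (t+1))) k]
  refine Finset.prod_congr rfl fun t _ => ?_
  have h1 : ofFin p t.val = p t.castSucc := by
    rw [ofFin_eq p t.val (le_of_lt t.isLt)]
    exact congrArg p (Fin.ext rfl)
  have h2 : ofFin p (t.val+1) = p t.succ := by
    rw [ofFin_eq p (t.val+1) t.isLt]
    exact congrArg p (Fin.ext rfl)
  rw [h1, h2]

lemma isEPath_ofFin {E : Fin n → Fin n → Prop} {k : ℕ} {p : Fin (k+1) → Fin n}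
    (h : IsEPath E k p) (t : ℕ) (ht : t < k) : E (ofFin p t) (ofFin p (t+1)) := by
  have h0 := h ⟨t, ht⟩
  have h1 : ofFin p t = p (Fin.castSucc ⟨t, ht⟩) := by
    rw [ofFin_eq p t (le_of_lt ht)]
    exact congrArg p (Fin.ext rfl)
  have h2 : ofFin p (t+1) = p (Fin.succ ⟨t, ht⟩) := by
    rw [ofFin_eq p (t+1) ht]
    exact congrArg p (Fin.ext rfl)
  rw [h1, h2]
  exact h0

lemma exists_repeat (p : ℕ → Fin n) : ∃ s t : ℕ, s < t ∧ t ≤ n ∧ p s = p t := by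
  obtain ⟨x, y, hxy, hf⟩ := Fintype.exists_ne_map_eq_of_card_lt
    (fun t : Fin (n+1) => p t.val) (by simp)
  have hv : x.val ≠ y.val := fun h => hxy (Fin.ext h)
  rcases hv.lt_or_gt with h | h
  · exact ⟨x.val, y.val, h, Nat.lt_succ_iff.mp y.isLt, hf⟩
  · exact ⟨y.val, x.val, h, Nat.lt_succ_iff.mp x.isLt, hf.symm⟩

lemma splice (A : Fin n → Fin n → ℝ≥0) (p : ℕ → Fin n) (s d e : ℕ) (hps : p s = p (s + d)) :
    wgt A (s + d + e) p =
      wgt A (s + e) (fun x => if x < s then p x else p (x + d)) * wgt A d (fun x => p (s + x)) := by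
  have l1 : wgt A (s + d + e) p
      = wgt A s p * (wgt A d (fun x => p (s + x)) * wgt A e (fun x => p (s + d + x))) := by
    rw [show s + d + e = s + (d + e) by omega, wgt_split, wgt_split]
    have : (fun x => (fun y => p (s + y)) (d + x)) = fun x => p (s + d + x) := by
      funext x; show p (s + (d + x)) = p (s + d + x); congr 1; omega
    rw [this]
  have l2 : wgt A (s + e) (fun x => if x < s then p x else p (x + d))
      = wgt A s p * wgt A e (fun x => p (s + d + x)) := by
    rw [wgt_split]
    congr 1
    · refine Finset.prod_congr rfl fun t ht => ?_
      have ht' := Finset.mem_range.mp ht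
      show A (if t < s then p t else p (t + d)) (if t + 1 < s then p (t+1) else p (t+1+d))
          = A (p t) (p (t+1))
      rw [if_pos ht']
      by_cases h2 : t + 1 < s
      · rw [if_pos h2]
      · have h3 : t + 1 = s := by omega
        rw [if_neg h2]
        congr 1
        rw [show t + 1 + d = s + d by omega, ← hps, h3]
    · refine Finset.prod_congr rfl fun t _ => ?_
      show A (if s + t < s then p (s+t) else p (s+t+d)) (if s+t+1 < s then p (s+t+1) else p (s+t+1+d))
          = A (p (s+d+t)) (p (s+d+(t+1)))
      rw [if_neg (by omega), if_neg (by omega)]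
      congr 2 <;> omega
  rw [l1, l2]
  ring

end walkconv

section boundedness

variable {n : ℕ}

lemma closed_wgt_le_one {A : Fin n → Fin n → ℝ≥0} (h1 : mcgm A = 1) :
    ∀ (k : ℕ) (p : ℕ → Fin n), p k = p 0 → wgt A k p ≤ 1 := by
  intro k
  induction k using Nat.strong_induction_on with
  | _ k ih =>
  intro p hcl
  rcases Nat.eq_zero_or_pos k with rfl | hk
  · simp [wgt]
  by_cases hkn : k ≤ n
  · have hbdd : BddAbove {x : ℝ≥0 | ∃ kk : ℕ, 0 < kk ∧ kk ≤ n ∧ ∃ q : Fin (kk+1) → Fin n,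
        q 0 = q (Fin.last kk) ∧ x = pathWeight A kk q ^ ((1 : ℝ) / (kk : ℝ))} := by
      by_contra hb
      have h2 := csSup_of_not_bddAbove hb
      rw [csSup_empty] at h2
      unfold mcgm at h1
      rw [h2] at h1
      exact one_ne_zero h1.symm
    have hq : pathWeight A k (fun t : Fin (k+1) => p t.val) = wgt A k p := by
      rw [← wgt_ofFin]
      refine Finset.prod_congr rfl fun t ht => ?_
      have ht' := Finset.mem_range.mp ht
      rw [ofFin_eq _ t (le_of_lt ht'), ofFin_eq _ (t+1) ht']
    have hmem : wgt A k p ^ ((1 : ℝ) / (k : ℝ)) ∈ {x : ℝ≥0 | ∃ kk : ℕ, 0 < kk ∧ kk ≤ n ∧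
        ∃ q : Fin (kk+1) → Fin n, q 0 = q (Fin.last kk) ∧
          x = pathWeight A kk q ^ ((1 : ℝ) / (kk : ℝ))} := by
      refine ⟨k, hk, hkn, fun t : Fin (k+1) => p t.val, ?_, by rw [hq]⟩
      show p ((0 : Fin (k+1)) : ℕ) = p ((Fin.last k : Fin (k+1)) : ℕ)
      simp only [Fin.val_zero, Fin.val_last]
      exact hcl.symm
    have hle : wgt A k p ^ ((1 : ℝ) / (k : ℝ)) ≤ 1 := by
      have := le_csSup hbdd hmem
      unfold mcgm at h1
      rw [h1] at this
      exact this
    have hk0 : ((k : ℝ)) ≠ 0 := Nat.cast_ne_zero.mpr (by omega)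
    calc wgt A k p = (wgt A k p ^ ((1:ℝ)/(k:ℝ))) ^ ((k:ℝ)) := by
          rw [← NNReal.rpow_mul, show ((1:ℝ)/(k:ℝ)) * (k:ℝ) = 1 by field_simp, NNReal.rpow_one]
      _ ≤ 1 ^ ((k:ℝ)) := NNReal.rpow_le_rpow hle (by positivity)
      _ = 1 := NNReal.one_rpow _
  · push_neg at hkn
    obtain ⟨s, t, hst, htn, hps⟩ := exists_repeat p
    have hd : p s = p (s + (t - s)) := by rw [show s + (t-s) = t by omega]; exact hps
    obtain ⟨e, he⟩ : ∃ e, k = s + (t - s) + e := ⟨k - t, by omega⟩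
    have hcl' : p (s + (t-s) + e) = p 0 := by rw [← he]; exact hcl
    rw [he, splice A p s (t-s) e hd]
    have hinner : wgt A (t-s) (fun x => p (s + x)) ≤ 1 := by
      refine ih (t-s) (by omega) _ ?_
      show p (s + (t - s)) = p (s + 0)
      rw [Nat.add_zero]
      exact hd.symm
    have houter : wgt A (s + e) (fun x => if x < s then p x else p (x + (t-s))) ≤ 1 := by
      refine ih (s + e) (by omega) _ ?_
      show (if s + e < s then p (s+e) else p (s+e+(t-s))) = (if 0 < s then p 0 else p (0 + (t-s)))
      rw [if_neg (by omega)]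
      have hL : p (s + e + (t-s)) = p 0 := by
        rw [show s + e + (t-s) = s + (t-s) + e by omega]
        exact hcl'
      rcases Nat.eq_zero_or_pos s with rfl | hs
      · rw [if_neg (lt_irrefl 0), hL]
        rw [show (0:ℕ) + (t - 0) = 0 + (t-0) from rfl]
        have : p (0 + (t-0)) = p 0 := by
          rw [Nat.zero_add, Nat.sub_zero]
          exact hps.symm
        rw [this]
      · rw [if_pos hs, hL]
    exact mul_le_one' houter hinner

noncomputable def maxE (A : Fin n → Fin n → ℝ≥0) : ℝ≥0 :=
  1 ⊔ Finset.univ.sup (fun pr : Fin n × Fin n => A pr.1 pr.2)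

lemma edge_le_maxE (A : Fin n → Fin n → ℝ≥0) (i j : Fin n) : A i j ≤ maxE A :=
  le_trans (Finset.le_sup (f := fun pr : Fin n × Fin n => A pr.1 pr.2)
    (Finset.mem_univ (i, j))) le_sup_right

lemma wgt_le_bound {A : Fin n → Fin n → ℝ≥0} (h1 : mcgm A = 1) :
    ∀ (k : ℕ) (p : ℕ → Fin n), wgt A k p ≤ maxE A ^ n := by
  intro k
  induction k using Nat.strong_induction_on with
  | _ k ih =>
  intro p
  by_cases hkn : k ≤ n
  · calc wgt A k p ≤ ∏ t ∈ Finset.range k, maxE A :=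
          Finset.prod_le_prod' fun t _ => edge_le_maxE A _ _
      _ = maxE A ^ k := by rw [Finset.prod_const, Finset.card_range]
      _ ≤ maxE A ^ n := pow_le_pow_right' le_sup_left hkn
  · push_neg at hkn
    obtain ⟨s, t, hst, htn, hps⟩ := exists_repeat p
    have hd : p s = p (s + (t - s)) := by rw [show s + (t-s) = t by omega]; exact hps
    obtain ⟨e, he⟩ : ∃ e, k = s + (t - s) + e := ⟨k - t, by omega⟩
    rw [he, splice A p s (t-s) e hd]
    have hinner : wgt A (t-s) (fun x => p (s + x)) ≤ 1 := by
      refine closed_wgt_le_one h1 (t-s) _ ?_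
      show p (s + (t - s)) = p (s + 0)
      rw [Nat.add_zero]
      exact hd.symm
    calc wgt A (s+e) _ * wgt A (t-s) (fun x => p (s + x)) ≤ maxE A ^ n * 1 :=
          mul_le_mul' (ih (s+e) (by omega) _) hinner
      _ = maxE A ^ n := mul_one _

lemma mpow_le_bound {A : Fin n → Fin n → ℝ≥0} (h1 : mcgm A = 1) (k : ℕ) (i j : Fin n) :
    mpow A k i j ≤ maxE A ^ n := by
  rcases mpow_exists A k i j with h0 | ⟨p, _, _, hw⟩
  · rw [h0]; exact zero_le
  · rw [← hw]; exact wgt_le_bound h1 k p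

lemma bdd_pow {A : Fin n → Fin n → ℝ≥0} (h1 : mcgm A = 1) (c : ℕ) (i j : Fin n) :
    BddAbove (Set.range fun u => mpow (mpow A c) u i j) := by
  refine ⟨maxE A ^ n, ?_⟩
  rintro x ⟨u, rfl⟩
  show mpow (mpow A c) u i j ≤ maxE A ^ n
  rw [mpow_mul]
  exact mpow_le_bound h1 _ i j

lemma pow_le_star {A : Fin n → Fin n → ℝ≥0} (h1 : mcgm A = 1) (c u : ℕ) (i j : Fin n) :
    mpow A (c * u) i j ≤ kleeneStar (mpow A c) i j := by
  rw [← mpow_mul]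
  exact le_ciSup (bdd_pow h1 c i j) u

lemma one_le_star_diag {A : Fin n → Fin n → ℝ≥0} (h1 : mcgm A = 1) (c : ℕ) (i : Fin n) :
    1 ≤ kleeneStar (mpow A c) i i := by
  have h0 : mpow (mpow A c) 0 i i = 1 := by simp [mpow]
  calc (1:ℝ≥0) = mpow (mpow A c) 0 i i := h0.symm
    _ ≤ _ := le_ciSup (bdd_pow h1 c i i) 0

end boundedness
section gammapos

lemma exists_set_gcd (S : Set ℕ) :
    ∃ d : ℕ, (∀ s ∈ S, d ∣ s) ∧ ∀ e : ℕ, (∀ s ∈ S, e ∣ s) → e ∣ d := by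
  obtain ⟨g, hg⟩ := Int.subgroup_cyclic (AddSubgroup.closure ((fun s : ℕ => (s : ℤ)) '' S))
  refine ⟨g.natAbs, ?_, ?_⟩
  · intro s hs
    have hmem : (s : ℤ) ∈ AddSubgroup.closure ((fun s : ℕ => (s : ℤ)) '' S) :=
      AddSubgroup.subset_closure ⟨s, hs, rfl⟩
    rw [hg, ← AddSubgroup.zmultiples_eq_closure] at hmem
    have hdvd : g ∣ (s : ℤ) := Int.mem_zmultiples_iff.mp hmem
    have h2 := Int.natAbs_dvd_natAbs.mpr hdvd
    rwa [Int.natAbs_natCast] at h2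
  · intro e he
    have hsub : AddSubgroup.closure ((fun s : ℕ => (s : ℤ)) '' S)
        ≤ AddSubgroup.zmultiples (e : ℤ) := by
      rw [AddSubgroup.closure_le]
      rintro x ⟨s, hs, rfl⟩
      exact Int.mem_zmultiples_iff.mpr (Int.natCast_dvd_natCast.mpr (he s hs))
    have hgmem : g ∈ AddSubgroup.closure ({g} : Set ℤ) :=
      AddSubgroup.subset_closure (Set.mem_singleton g)
    rw [← hg] at hgmem
    have h3 := hsub hgmem
    rw [Int.mem_zmultiples_iff] at h3
    have h4 := Int.natAbs_dvd_natAbs.mpr h3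
    rwa [Int.natAbs_natCast] at h4

lemma setGcd_pos {S : Set ℕ} {s₀ : ℕ} (h0 : s₀ ∈ S) (hpos : 0 < s₀) : 0 < setGcd S := by
  obtain ⟨d, hd1, hd2⟩ := exists_set_gcd S
  have hne : {d : ℕ | (∀ s ∈ S, d ∣ s) ∧ ∀ e : ℕ, (∀ s ∈ S, e ∣ s) → e ∣ d}.Nonempty :=
    ⟨d, hd1, hd2⟩
  have hIn := Nat.sInf_mem hne
  obtain ⟨hdvd, -⟩ := hIn
  exact Nat.pos_of_dvd_of_pos (hdvd s₀ h0) hpos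

lemma graphCyc_pos {n : ℕ} (E : Fin n → Fin n → Prop) : 0 < graphCyc E := by
  rw [Nat.pos_iff_ne_zero]
  intro h0
  unfold graphCyc at h0
  rw [Finset.lcm_eq_zero_iff] at h0
  obtain ⟨i, -, hfi'⟩ := h0
  have hfi : (if (cycLen E i).Nonempty then setGcd (cycLen E i) else 1) = 0 := hfi'
  by_cases hne : (cycLen E i).Nonempty
  · rw [if_pos hne] at hfi
    obtain ⟨k, hk⟩ := hne
    have := setGcd_pos hk hk.1
    omega
  · rw [if_neg hne] at hfi
    omega

end gammapos

section critgraph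

variable {n : ℕ} {A : Fin n → Fin n → ℝ≥0} {G : CritSubgraph A}

lemma smat_ne_zero {i j : Fin n} (h : Smat A G i j ≠ 0) :
    G.E i j ∧ Smat A G i j = A i j := by
  by_cases hE : G.E i j
  · exact ⟨hE, if_pos hE⟩
  · exact absurd (if_neg hE) h

lemma smat_le (i j : Fin n) : Smat A G i j ≤ A i j := by
  unfold Smat
  split
  · exact le_rfl
  · exact zero_le

lemma wgt_A_of_smat_ne {k : ℕ} {p : ℕ → Fin n} (h : wgt (Smat A G) k p ≠ 0) :
    wgt A k p = wgt (Smat A G) k p ∧ ∀ t < k, G.E (p t) (p (t+1)) := by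
  have hfac : ∀ t ∈ Finset.range k, Smat A G (p t) (p (t+1)) ≠ 0 := by
    intro t ht hz
    exact h (Finset.prod_eq_zero ht hz)
  constructor
  · exact Finset.prod_congr rfl fun t ht => ((smat_ne_zero (hfac t ht)).2).symm
  · intro t ht
    exact (smat_ne_zero (hfac t (Finset.mem_range.mpr ht))).1

lemma nc_of_mpow_smat {t : ℕ} {a k : Fin n} (h : mpow (Smat A G) t a k ≠ 0)
    (hNa : G.Nc a) : G.Nc k := by
  cases t with
  | zero =>
    have hak : a = k := by
      by_contra hne
      exact h (by simp [mpow, hne])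
    exact hak ▸ hNa
  | succ m =>
    rw [mpow_succ_right] at h
    have hex : ∃ x, mpow (Smat A G) m a x * Smat A G x k ≠ 0 := by
      by_contra hall
      push_neg at hall
      refine h (le_antisymm ?_ (zero_le))
      show (Finset.univ : Finset (Fin n)).sup
        (fun x => mpow (Smat A G) m a x * Smat A G x k) ≤ 0
      exact Finset.sup_le fun x _ => le_of_eq (hall x)
    obtain ⟨x, hx⟩ := hex
    have hS : Smat A G x k ≠ 0 := fun h0 => hx (by rw [h0, mul_zero])
    exact Or.inr ⟨x, (smat_ne_zero hS).1⟩

lemma crit_complement (h1 : mcgm A = 1) {x y : Fin n} (hxy : IsCriticalEdge A x y) :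
    ∃ m : ℕ, ∃ r : ℕ → Fin n, r 0 = y ∧ r m = x ∧ A x y * wgt A m r = 1 := by
  obtain ⟨k, hk, hkn, p, hcl, hwgt, t0, hx, hy⟩ := hxy
  set pn := ofFin p with hpn
  have hwp : wgt A k pn = pathWeight A k p := wgt_ofFin A p
  have hclp : pn k = pn 0 := by rw [hpn, ofFin_last, ofFin_zero, ← hcl]
  have hW1 : wgt A k pn = 1 := by
    have hk0 : ((k : ℝ)) ≠ 0 := Nat.cast_ne_zero.mpr (by omega)
    have hp1 : pathWeight A k p ^ ((1:ℝ)/(k:ℝ)) = 1 := by rw [hwgt, h1]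
    have heq : pathWeight A k p = 1 := by
      have h2 : (pathWeight A k p ^ ((1:ℝ)/(k:ℝ))) ^ ((k:ℝ)) = 1 := by
        rw [hp1, NNReal.one_rpow]
      rwa [← NNReal.rpow_mul, show ((1:ℝ)/(k:ℝ)) * (k:ℝ) = 1 by field_simp,
        NNReal.rpow_one] at h2
    rw [hwp, heq]
  set t := t0.val with htdef
  have hpx : pn t = x := by
    rw [hpn, ofFin_eq p t (le_of_lt t0.isLt), ← hx]
    exact congrArg p (Fin.ext rfl)
  have hpy : pn (t+1) = y := by
    rw [hpn, ofFin_eq p (t+1) t0.isLt, ← hy]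
    exact congrArg p (Fin.ext rfl)
  obtain ⟨m, hm⟩ : ∃ m, k = t + 1 + m := ⟨k - (t+1), by have := t0.isLt; omega⟩
  -- the rotated complement walk
  refine ⟨m + t, fun s => if s ≤ m then pn (t + 1 + s) else pn (s - m), ?_, ?_, ?_⟩
  · show (if 0 ≤ m then pn (t + 1 + 0) else pn (0 - m)) = y
    rw [if_pos (Nat.zero_le m), Nat.add_zero, hpy]
  · show (if m + t ≤ m then pn (t + 1 + (m + t)) else pn (m + t - m)) = x
    by_cases hc : m + t ≤ m
    · have ht0 : t = 0 := by omega
      rw [if_pos hc, show t + 1 + (m + t) = k by omega, hclp, ← hpx, ht0]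
    · rw [if_neg hc, Nat.add_sub_cancel_left, hpx]
  · -- weight computation
    have hsplit : wgt A k pn
        = wgt A t pn * (A (pn t) (pn (t+1)) * wgt A m (fun s => pn (t + 1 + s))) := by
      have e0 : (fun s => (fun y => pn (t + y)) (1 + s)) = fun s => pn (t + 1 + s) := by
        funext s; show pn (t + (1 + s)) = pn (t + 1 + s); congr 1; omega
      have e1 : wgt A 1 (fun s => pn (t + s)) = A (pn (t + 0)) (pn (t + 0 + 1)) := by
        unfold wgt; rw [Finset.prod_range_one]
      rw [hm, show t + 1 + m = t + (1 + m) by omega, wgt_split, wgt_split, e0, e1]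
      norm_num
    have hr : wgt A (m + t) (fun s => if s ≤ m then pn (t + 1 + s) else pn (s - m))
        = wgt A m (fun s => pn (t + 1 + s)) * wgt A t pn := by
      rw [wgt_split]
      congr 1
      · refine Finset.prod_congr rfl fun s hs => ?_
        have hs' := Finset.mem_range.mp hs
        show A (if s ≤ m then pn (t + 1 + s) else pn (s - m))
            (if s + 1 ≤ m then pn (t + 1 + (s+1)) else pn (s + 1 - m)) = _
        rw [if_pos (by omega : s ≤ m), if_pos (by omega : s + 1 ≤ m)]
      · refine Finset.prod_congr rfl fun s hs => ?_
        have hs' := Finset.mem_range.mp hs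
        show A (if m + s ≤ m then pn (t + 1 + (m + s)) else pn (m + s - m))
            (if m + s + 1 ≤ m then pn (t + 1 + (m + s + 1)) else pn (m + s + 1 - m)) = _
        have h2 : (if m + s ≤ m then pn (t + 1 + (m + s)) else pn (m + s - m)) = pn s := by
          by_cases hc : m + s ≤ m
          · have hs0 : s = 0 := by omega
            rw [if_pos hc, hs0, show t + 1 + (m + 0) = k from by omega, hclp]
          · rw [if_neg hc, Nat.add_sub_cancel_left]
        have h3 : (if m + s + 1 ≤ m then pn (t + 1 + (m + s + 1)) else pn (m + s + 1 - m))
            = pn (s + 1) := by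
          rw [if_neg (by omega), show m + s + 1 - m = s + 1 from by omega]
        rw [h2, h3]
    rw [hr, hpx, hpy] at *
    calc A x y * (wgt A m (fun s => pn (t + 1 + s)) * wgt A t pn)
        = wgt A t pn * (A x y * wgt A m (fun s => pn (t + 1 + s))) := by ring
      _ = 1 := by rw [← hpx, ← hpy, ← hsplit, hW1]

lemma exists_cycle {b : Fin n} (hNb : G.Nc b) :
    ∃ ℓ : ℕ, 0 < ℓ ∧ ∃ z : ℕ → Fin n, z 0 = b ∧ z ℓ = b ∧ ∀ s < ℓ, G.E (z s) (z (s+1)) := by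
  rcases hNb with ⟨j, hE⟩ | ⟨j, hE⟩
  · obtain ⟨k, p, hpath, hp0, hpl⟩ := G.reducible b j hE
    set w : ℕ → Fin n := fun s => if s = 0 then b else j with hw
    have hcond : w 1 = ofFin p 0 := by
      rw [ofFin_zero, hp0]; rfl
    refine ⟨k+1, Nat.succ_pos k, cat 1 w (ofFin p), ?_, ?_, ?_⟩
    · rw [cat_left 1 w (ofFin p) 0 (by omega)]; rfl
    · rw [show k + 1 = 1 + k by omega, cat_right 1 w (ofFin p) hcond k, ofFin_last, hpl]
    · intro s hs
      rcases Nat.eq_zero_or_pos s with rfl | hs0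
      · rw [cat_left 1 w (ofFin p) 0 (by omega), cat_left 1 w (ofFin p) 1 le_rfl]
        show G.E b j
        exact hE
      · have e1 : cat 1 w (ofFin p) s = ofFin p (s - 1) := by
          have := cat_right 1 w (ofFin p) hcond (s-1)
          rw [← this]; congr 1; omega
        have e2 : cat 1 w (ofFin p) (s+1) = ofFin p s := by
          rw [show s + 1 = 1 + s by omega, cat_right 1 w (ofFin p) hcond]
        have e3 : ofFin p s = ofFin p ((s - 1) + 1) := by congr 1; omega
        rw [e1, e2, e3]
        exact isEPath_ofFin hpath (s-1) (by omega)
  · obtain ⟨k, p, hpath, hp0, hpl⟩ := G.reducible j b hE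
    set w : ℕ → Fin n := fun s => if s = 0 then j else b with hw
    have hcond : ofFin p k = w 0 := by
      rw [ofFin_last, hpl]; rfl
    refine ⟨k+1, Nat.succ_pos k, cat k (ofFin p) w, ?_, ?_, ?_⟩
    · rw [cat_left k (ofFin p) w 0 (Nat.zero_le k), ofFin_zero, hp0]
    · rw [cat_right k (ofFin p) w hcond 1]
      rfl
    · intro s hs
      by_cases hsk : s < k
      · rw [cat_left k (ofFin p) w s (by omega), cat_left k (ofFin p) w (s+1) (by omega)]
        exact isEPath_ofFin hpath s hsk
      · have hsk' : s = k := by omega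
        rw [hsk']
        rw [cat_left k (ofFin p) w k le_rfl, cat_right k (ofFin p) w hcond 1]
        show G.E (ofFin p k) (if 1 = 0 then j else b)
        rw [ofFin_last, hpl]
        exact hE

lemma cycle_wgt_one (h1 : mcgm A = 1) {ℓ : ℕ} (hl : 0 < ℓ) {z : ℕ → Fin n}
    (hzc : z ℓ = z 0) (hE : ∀ s < ℓ, G.E (z s) (z (s+1))) : wgt A ℓ z = 1 := by
  have key : ∀ j ≤ ℓ, ∃ m, ∃ W : ℕ → Fin n, W 0 = z j ∧ W m = z 0 ∧
      wgt A j z * wgt A m W = 1 := by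
    intro j hj
    induction j with
    | zero => exact ⟨0, fun _ => z 0, rfl, rfl, by simp [wgt]⟩
    | succ j ihj =>
      obtain ⟨m, W, hW0, hWm, hprod⟩ := ihj (by omega)
      obtain ⟨m', r, hr0, hrm, hr⟩ := crit_complement h1 (G.critical _ _ (hE j (by omega)))
      refine ⟨m' + m, cat m' r W, ?_, ?_, ?_⟩
      · rw [cat_left m' r W 0 (Nat.zero_le m'), hr0]
      · rw [cat_right m' r W (hrm.trans hW0.symm) m, hWm]
      · rw [wgt_cat A m' m r W (hrm.trans hW0.symm)]
        have hsplit : wgt A (j+1) z = wgt A j z * A (z j) (z (j+1)) := by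
          have e1 : wgt A 1 (fun s => z (j + s)) = A (z (j + 0)) (z (j + 0 + 1)) := by
            unfold wgt; rw [Finset.prod_range_one]
          rw [wgt_split A j 1 z, e1]
          norm_num
        rw [hsplit]
        calc wgt A j z * A (z j) (z (j+1)) * (wgt A m' r * wgt A m W)
            = (A (z j) (z (j+1)) * wgt A m' r) * (wgt A j z * wgt A m W) := by ring
          _ = 1 := by rw [hr, hprod, one_mul]
  obtain ⟨m, W, hW0, hWm, hprod⟩ := key ℓ le_rfl
  have hWcl : W m = W 0 := by rw [hWm, hW0, hzc]
  have h2 : wgt A m W ≤ 1 := closed_wgt_le_one h1 m W hWcl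
  have h3 : wgt A ℓ z ≤ 1 := closed_wgt_le_one h1 ℓ z hzc
  refine le_antisymm h3 ?_
  calc (1:ℝ≥0) = wgt A ℓ z * wgt A m W := hprod.symm
    _ ≤ wgt A ℓ z * 1 := mul_le_mul_right h2 _
    _ = wgt A ℓ z := mul_one _

lemma cycle_package (h1 : mcgm A = 1) {b : Fin n} (hNb : G.Nc b) :
    ∃ ℓ : ℕ, 0 < ℓ ∧ ∃ z : ℕ → Fin n, z 0 = b ∧ z ℓ = z 0 ∧
      (∀ s < ℓ, G.E (z s) (z (s+1))) ∧ wgt A ℓ z = 1 := by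
  obtain ⟨ℓ, hl, z, hz0, hzl, hE⟩ := exists_cycle hNb
  have hzc : z ℓ = z 0 := hzl.trans hz0.symm
  exact ⟨ℓ, hl, z, hz0, hzc, hE, cycle_wgt_one h1 hl hzc hE⟩

end critgraph

section periodic

variable {n : ℕ}

lemma zp_succ {ℓ : ℕ} (hl : 0 < ℓ) {z : ℕ → Fin n} (hz : z ℓ = z 0) (t : ℕ) :
    z ((t+1) % ℓ) = z (t % ℓ + 1) := by
  have hmd := Nat.mod_add_div t ℓ
  have h4 : (t+1) % ℓ = (t % ℓ + 1) % ℓ := by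
    conv_lhs => rw [show t + 1 = (t % ℓ + 1) + ℓ * (t / ℓ) by omega]
    rw [Nat.add_mul_mod_self_left]
  have h3 : t % ℓ + 1 ≤ ℓ := Nat.mod_lt t hl
  rcases eq_or_lt_of_le h3 with heq | hlt
  · rw [h4, heq, Nat.mod_self]
    exact hz.symm
  · rw [h4, Nat.mod_eq_of_lt hlt]

lemma zp_wgt (M : Fin n → Fin n → ℝ≥0) {ℓ : ℕ} (hl : 0 < ℓ) {z : ℕ → Fin n}
    (hz : z ℓ = z 0) : ∀ N : ℕ, wgt M (N * ℓ) (fun t => z (t % ℓ)) = (wgt M ℓ z) ^ N := by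
  intro N
  induction N with
  | zero => simp [wgt]
  | succ N ih =>
    rw [show (N+1)*ℓ = N*ℓ + ℓ by ring, wgt_split, ih, pow_succ]
    congr 1
    refine Finset.prod_congr rfl fun t ht => ?_
    have ht' := Finset.mem_range.mp ht
    show M (z ((N * ℓ + t) % ℓ)) (z ((N * ℓ + t + 1) % ℓ)) = M (z t) (z (t+1))
    have e1 : (N * ℓ + t) % ℓ = t := Nat.mul_add_mod_of_lt ht'
    have e2 : z ((N * ℓ + t + 1) % ℓ) = z (t + 1) := by
      rw [zp_succ hl hz (N*ℓ+t), e1]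
    rw [e1, e2]

end periodic
section mainlemmas

variable {n : ℕ} {A : Fin n → Fin n → ℝ≥0} {G : CritSubgraph A}

lemma le_csr (t : ℕ) (i j a d : Fin n) :
    (Cmat A G i a * mpow (Smat A G) t a d) * Rmat A G d j ≤ csr A G t i j := by
  have h1 : Cmat A G i a * mpow (Smat A G) t a d
      ≤ mmul (Cmat A G) (mpow (Smat A G) t) i d :=
    Finset.le_sup (f := fun a => Cmat A G i a * mpow (Smat A G) t a d) (Finset.mem_univ a)
  have h2 : (mmul (Cmat A G) (mpow (Smat A G) t) i d) * Rmat A G d j ≤ csr A G t i j :=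
    Finset.le_sup (f := fun d => mmul (Cmat A G) (mpow (Smat A G) t) i d * Rmat A G d j)
      (Finset.mem_univ d)
  exact le_trans (mul_le_mul_left h1 _) h2

lemma cmat_eq {a : Fin n} (hNa : G.Nc a) (i : Fin n) :
    Cmat A G i a = ⨆ u, mpow (mpow A (graphCyc G.E)) u i a := by
  unfold Cmat kleeneStar
  rw [if_pos hNa]

lemma rmat_eq {d : Fin n} (hNd : G.Nc d) (j : Fin n) :
    Rmat A G d j = ⨆ u, mpow (mpow A (graphCyc G.E)) u d j := by
  unfold Rmat kleeneStar
  rw [if_pos hNd]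

lemma key_ge (h1 : mcgm A = 1) (t₁ t₂ : ℕ) (i j a k d : Fin n) :
    (Cmat A G i a * (mpow (Smat A G) t₁ a k * mpow (Smat A G) t₂ k d)) * Rmat A G d j
      ≤ mmul (csr A G t₁) (csr A G t₂) i j := by
  rcases eq_or_ne ((Cmat A G i a * (mpow (Smat A G) t₁ a k * mpow (Smat A G) t₂ k d))
      * Rmat A G d j) 0 with h0 | hne
  · rw [h0]; exact zero_le
  simp only [mul_ne_zero_iff] at hne
  obtain ⟨⟨hCia, hm1, hm2⟩, hRdj⟩ := hne
  have hNa : G.Nc a := by by_contra h; exact hCia (by unfold Cmat; rw [if_neg h])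
  have hNd : G.Nc d := by by_contra h; exact hRdj (by unfold Rmat; rw [if_neg h])
  have hNk : G.Nc k := nc_of_mpow_smat hm1 hNa
  have hRkk : (1:ℝ≥0) ≤ Rmat A G k k := by
    rw [rmat_eq hNk]
    exact one_le_star_diag h1 _ k
  have hCkk : (1:ℝ≥0) ≤ Cmat A G k k := by
    rw [cmat_eq hNk]
    exact one_le_star_diag h1 _ k
  calc (Cmat A G i a * (mpow (Smat A G) t₁ a k * mpow (Smat A G) t₂ k d)) * Rmat A G d j
      = ((Cmat A G i a * mpow (Smat A G) t₁ a k) * 1)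
        * ((1 * mpow (Smat A G) t₂ k d) * Rmat A G d j) := by ring
    _ ≤ ((Cmat A G i a * mpow (Smat A G) t₁ a k) * Rmat A G k k)
        * ((Cmat A G k k * mpow (Smat A G) t₂ k d) * Rmat A G d j) :=
        mul_le_mul' (mul_le_mul_right hRkk _)
          (mul_le_mul_left (mul_le_mul_left hCkk _) _)
    _ ≤ csr A G t₁ i k * csr A G t₂ k j := mul_le_mul' (le_csr t₁ i k a k) (le_csr t₂ k j k d)
    _ ≤ _ := Finset.le_sup (f := fun k => csr A G t₁ i k * csr A G t₂ k j) (Finset.mem_univ k)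

lemma peel4 {f g h e : ℕ → ℝ≥0} {s1 s2 c : ℝ≥0}
    (H : ∀ u v w x, ((f u * s1) * g v) * ((h w * s2) * e x) ≤ c) :
    (((⨆ u, f u) * s1) * (⨆ v, g v)) * (((⨆ w, h w) * s2) * (⨆ x, e x)) ≤ c := by
  have e1 : (((⨆ u, f u) * s1) * (⨆ v, g v)) * (((⨆ w, h w) * s2) * (⨆ x, e x))
      = (⨆ u, f u) * (s1 * ((⨆ v, g v) * (((⨆ w, h w) * s2) * (⨆ x, e x)))) := by ring
  rw [e1]
  refine isup_mul_le fun u => ?_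
  have e2 : f u * (s1 * ((⨆ v, g v) * (((⨆ w, h w) * s2) * (⨆ x, e x))))
      = (⨆ v, g v) * ((f u * s1) * (((⨆ w, h w) * s2) * (⨆ x, e x))) := by ring
  rw [e2]
  refine isup_mul_le fun v => ?_
  have e3 : g v * ((f u * s1) * (((⨆ w, h w) * s2) * (⨆ x, e x)))
      = (⨆ w, h w) * ((g v * (f u * s1)) * (s2 * (⨆ x, e x))) := by ring
  rw [e3]
  refine isup_mul_le fun w => ?_
  have e4 : h w * ((g v * (f u * s1)) * (s2 * (⨆ x, e x)))
      = (⨆ x, e x) * ((h w * (g v * (f u * s1))) * s2) := by ring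
  rw [e4]
  refine isup_mul_le fun x => ?_
  calc e x * ((h w * (g v * (f u * s1))) * s2)
      = ((f u * s1) * g v) * ((h w * s2) * e x) := by ring
    _ ≤ c := H u v w x

lemma peel2 {f g : ℕ → ℝ≥0} {s c : ℝ≥0}
    (H : ∀ u v, (f u * s) * g v ≤ c) :
    ((⨆ u, f u) * s) * (⨆ v, g v) ≤ c := by
  have e1 : ((⨆ u, f u) * s) * (⨆ v, g v)
      = (⨆ u, f u) * (s * (⨆ v, g v)) := by ring
  rw [e1]
  refine isup_mul_le fun u => ?_
  have e2 : f u * (s * (⨆ v, g v)) = (⨆ v, g v) * (f u * s) := by ring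
  rw [e2]
  refine isup_mul_le fun v => ?_
  calc g v * (f u * s) = (f u * s) * g v := by ring
    _ ≤ c := H u v

lemma key_le (h1 : mcgm A = 1) (t₁ t₂ : ℕ) (i j k a b c d : Fin n) :
    ((Cmat A G i a * mpow (Smat A G) t₁ a b) * Rmat A G b k) *
      ((Cmat A G k c * mpow (Smat A G) t₂ c d) * Rmat A G d j) ≤ csr A G (t₁ + t₂) i j := by
  rcases eq_or_ne (((Cmat A G i a * mpow (Smat A G) t₁ a b) * Rmat A G b k) *
      ((Cmat A G k c * mpow (Smat A G) t₂ c d) * Rmat A G d j)) 0 with h0 | hne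
  · rw [h0]; exact zero_le
  simp only [mul_ne_zero_iff] at hne
  obtain ⟨⟨⟨hCia, hm1⟩, hRbk⟩, ⟨⟨hCkc, hm2⟩, hRdj⟩⟩ := hne
  have hNa : G.Nc a := by by_contra h; exact hCia (by unfold Cmat; rw [if_neg h])
  have hNb : G.Nc b := by by_contra h; exact hRbk (by unfold Rmat; rw [if_neg h])
  have hNc : G.Nc c := by by_contra h; exact hCkc (by unfold Cmat; rw [if_neg h])
  have hNd : G.Nc d := by by_contra h; exact hRdj (by unfold Rmat; rw [if_neg h])
  rw [cmat_eq hNa, cmat_eq hNc, rmat_eq hNb, rmat_eq hNd]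
  refine peel4 fun u v w x => ?_
  simp only [mpow_mul]
  set γ := graphCyc G.E with hγ
  have γpos : 0 < γ := graphCyc_pos G.E
  -- extract walks
  rcases mpow_exists A (γ*u) i a with hz | ⟨W0, hW00, hW0e, hW0w⟩
  · rw [hz]; simp only [zero_mul]; exact zero_le
  rcases mpow_exists A (γ*v) b k with hz | ⟨Wv, hWv0, hWve, hWvw⟩
  · rw [hz]; simp only [mul_zero, zero_mul]; exact zero_le
  rcases mpow_exists A (γ*w) k c with hz | ⟨Ww, hWw0, hWwe, hWww⟩
  · rw [hz]; simp only [mul_zero, zero_mul]; exact zero_le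
  rcases mpow_exists A (γ*x) d j with hz | ⟨W3, hW30, hW3e, hW3w⟩
  · rw [hz]; simp only [mul_zero, zero_mul]; exact zero_le
  obtain ⟨W1, hW10, hW1e, hW1w⟩ := (mpow_exists (Smat A G) t₁ a b).resolve_left hm1
  obtain ⟨W2, hW20, hW2e, hW2w⟩ := (mpow_exists (Smat A G) t₂ c d).resolve_left hm2
  -- cycle at b
  obtain ⟨ℓ, hl, z, hz0, hzc, hzE, hzw⟩ := cycle_package h1 hNb
  set L := γ * ℓ * (t₂ + 1) with hL
  obtain ⟨e, he⟩ : ∃ e, t₂ + e = L := by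
    refine ⟨L - t₂, ?_⟩
    have h2 : t₂ + 1 ≤ L := by
      rw [hL]
      exact Nat.le_mul_of_pos_left _ (Nat.mul_pos γpos hl)
    omega
  set Zp : ℕ → Fin n := fun t => z (t % ℓ) with hZp
  have hZpE : ∀ t, G.E (Zp t) (Zp (t+1)) := by
    intro t
    show G.E (z (t % ℓ)) (z ((t+1) % ℓ))
    rw [zp_succ hl hzc t]
    exact hzE _ (Nat.mod_lt t hl)
  have hZpS : ∀ m : ℕ, wgt (Smat A G) m Zp = wgt A m Zp := by
    intro m
    refine Finset.prod_congr rfl fun t _ => ?_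
    show Smat A G (Zp t) (Zp (t+1)) = A (Zp t) (Zp (t+1))
    unfold Smat
    rw [if_pos (hZpE t)]
  have hZpL : wgt A L Zp = 1 := by
    rw [show L = (γ*(t₂+1)) * ℓ by rw [hL]; ring, zp_wgt A hl hzc (γ*(t₂+1)), hzw, one_pow]
  have hsplitZp : wgt A t₂ Zp * wgt A e (fun s => Zp (t₂ + s)) = 1 := by
    rw [← wgt_split, he, hZpL]
  -- O1 : critical walk from a of length t₁+t₂
  set d' := Zp t₂ with hd'
  have hNd' : G.Nc d' := Or.inl ⟨Zp (t₂+1), hZpE t₂⟩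
  have hb0 : W1 t₁ = Zp 0 := by
    rw [hW1e]
    show b = z (0 % ℓ)
    rw [Nat.zero_mod, hz0]
  have hO1w : wgt (Smat A G) (t₁+t₂) (cat t₁ W1 Zp)
      = wgt (Smat A G) t₁ W1 * wgt (Smat A G) t₂ Zp := wgt_cat (Smat A G) t₁ t₂ W1 Zp hb0
  have hO10 : cat t₁ W1 Zp 0 = a := by rw [cat_left t₁ W1 Zp 0 (Nat.zero_le t₁), hW10]
  have hO1e : cat t₁ W1 Zp (t₁+t₂) = d' := by
    rcases Nat.eq_zero_or_pos t₂ with rfl | ht2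
    · rw [Nat.add_zero, cat_left t₁ W1 Zp t₁ le_rfl, hb0]
    · rw [cat_right t₁ W1 Zp hb0 t₂]
  have hO1le : wgt (Smat A G) t₁ W1 * wgt (Smat A G) t₂ Zp ≤ mpow (Smat A G) (t₁+t₂) a d' := by
    rw [← hO1w]
    have hw := walk_le_mpow (Smat A G) (t₁+t₂) (cat t₁ W1 Zp)
    rwa [hO10, hO1e] at hw
  -- O2 : walk from d' to j of length ≡ 0 mod γ
  set O2 := cat e (fun s => Zp (t₂ + s)) (cat (γ*v) Wv (cat (γ*w) Ww (cat t₂ W2 W3))) with hO2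
  have c4 : W2 t₂ = W3 0 := by rw [hW2e, hW30]
  have c3 : Ww (γ*w) = cat t₂ W2 W3 0 := by
    rw [cat_left t₂ W2 W3 0 (Nat.zero_le t₂), hWwe, hW20]
  have c2 : Wv (γ*v) = cat (γ*w) Ww (cat t₂ W2 W3) 0 := by
    rw [cat_left (γ*w) Ww _ 0 (Nat.zero_le _), hWve, hWw0]
  have c1 : (fun s => Zp (t₂ + s)) e = cat (γ*v) Wv (cat (γ*w) Ww (cat t₂ W2 W3)) 0 := by
    rw [cat_left (γ*v) Wv _ 0 (Nat.zero_le _), hWv0]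
    show Zp (t₂ + e) = b
    rw [he]
    show z (L % ℓ) = b
    have : L % ℓ = 0 := by
      rw [hL, show γ*ℓ*(t₂+1) = (γ*(t₂+1))*ℓ by ring]
      exact Nat.mul_mod_left _ _
    rw [this, hz0]
  have hO2w : wgt A (e + (γ*v + (γ*w + (t₂ + γ*x)))) O2
      = wgt A e (fun s => Zp (t₂+s)) *
        (wgt A (γ*v) Wv * (wgt A (γ*w) Ww * (wgt A t₂ W2 * wgt A (γ*x) W3))) := by
    rw [hO2, wgt_cat A e _ _ _ c1, wgt_cat A _ _ _ _ c2, wgt_cat A _ _ _ _ c3,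
      wgt_cat A _ _ _ _ c4]
  have hlen : e + (γ*v + (γ*w + (t₂ + γ*x))) = γ * (ℓ*(t₂+1) + (v + w + x)) := by
    have h2 : e + (γ*v + (γ*w + (t₂ + γ*x))) = (t₂ + e) + (γ*v + γ*w + γ*x) := by ring
    rw [h2, he, hL]; ring
  have hO20 : O2 0 = d' := by
    rw [hO2, cat_left e _ _ 0 (Nat.zero_le e)]
    show Zp (t₂ + 0) = d'
    rw [Nat.add_zero]
  have hO2e : O2 (e + (γ*v + (γ*w + (t₂ + γ*x)))) = j := by
    rw [hO2, cat_right e _ _ c1, cat_right _ _ _ c2, cat_right _ _ _ c3, cat_right _ _ _ c4,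
      hW3e]
  have hO2le : wgt A e (fun s => Zp (t₂+s)) *
        (wgt A (γ*v) Wv * (wgt A (γ*w) Ww * (wgt A t₂ W2 * wgt A (γ*x) W3)))
      ≤ ⨆ uu, mpow (mpow A γ) uu d' j := by
    rw [← hO2w]
    have hw := walk_le_mpow A (e + (γ*v + (γ*w + (t₂ + γ*x)))) O2
    rw [hO20, hO2e] at hw
    refine hw.trans ?_
    rw [hlen]
    exact pow_le_star h1 γ (ℓ*(t₂+1) + (v + w + x)) d' j
  -- convert W2 weight
  have hW2ne : wgt (Smat A G) t₂ W2 ≠ 0 := by rw [hW2w]; exact hm2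
  have hW2A : wgt A t₂ W2 = wgt (Smat A G) t₂ W2 := (wgt_A_of_smat_ne hW2ne).1
  rw [hW2A] at hO2le
  -- C bound
  have hC : wgt A (γ*u) W0 ≤ Cmat A G i a := by
    rw [cmat_eq hNa, hW0w]
    exact pow_le_star h1 γ u i a
  have hR : wgt A e (fun s => Zp (t₂+s)) *
        (wgt A (γ*v) Wv * (wgt A (γ*w) Ww * (wgt (Smat A G) t₂ W2 * wgt A (γ*x) W3)))
      ≤ Rmat A G d' j := by
    rw [rmat_eq hNd']
    exact hO2le
  -- assemble
  rw [← hW0w, ← hW1w, ← hWvw, ← hWww, ← hW2w, ← hW3w]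
  have hβ : wgt (Smat A G) t₂ Zp * wgt A e (fun s => Zp (t₂ + s)) = 1 := by
    rw [hZpS t₂]; exact hsplitZp
  have bigEq : ((wgt A (γ*u) W0 * wgt (Smat A G) t₁ W1) * wgt A (γ*v) Wv) *
        ((wgt A (γ*w) Ww * wgt (Smat A G) t₂ W2) * wgt A (γ*x) W3)
      = (wgt A (γ*u) W0 * (wgt (Smat A G) t₁ W1 * wgt (Smat A G) t₂ Zp)) *
        (wgt A e (fun s => Zp (t₂+s)) *
          (wgt A (γ*v) Wv * (wgt A (γ*w) Ww * (wgt (Smat A G) t₂ W2 * wgt A (γ*x) W3)))) := by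
    have h3 : (wgt A (γ*u) W0 * (wgt (Smat A G) t₁ W1 * wgt (Smat A G) t₂ Zp)) *
        (wgt A e (fun s => Zp (t₂+s)) *
          (wgt A (γ*v) Wv * (wgt A (γ*w) Ww * (wgt (Smat A G) t₂ W2 * wgt A (γ*x) W3))))
        = (((wgt A (γ*u) W0 * wgt (Smat A G) t₁ W1) * wgt A (γ*v) Wv) *
            ((wgt A (γ*w) Ww * wgt (Smat A G) t₂ W2) * wgt A (γ*x) W3)) *
          (wgt (Smat A G) t₂ Zp * wgt A e (fun s => Zp (t₂ + s))) := by ring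
    rw [h3, hβ, mul_one]
  rw [bigEq]
  calc (wgt A (γ*u) W0 * (wgt (Smat A G) t₁ W1 * wgt (Smat A G) t₂ Zp)) *
        (wgt A e (fun s => Zp (t₂+s)) *
          (wgt A (γ*v) Wv * (wgt A (γ*w) Ww * (wgt (Smat A G) t₂ W2 * wgt A (γ*x) W3))))
      ≤ (Cmat A G i a * mpow (Smat A G) (t₁+t₂) a d') * Rmat A G d' j :=
        mul_le_mul' (mul_le_mul' hC hO1le) hR
    _ ≤ csr A G (t₁ + t₂) i j := le_csr (t₁+t₂) i j a d'

end mainlemmas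
section assembly

variable {n : ℕ} {A : Fin n → Fin n → ℝ≥0} {G : CritSubgraph A}

lemma part1_ge (h1 : mcgm A = 1) (t₁ t₂ : ℕ) (i j : Fin n) :
    mmul (csr A G t₁) (csr A G t₂) i j ≤ csr A G (t₁+t₂) i j := by
  show (Finset.univ : Finset (Fin n)).sup (fun k => csr A G t₁ i k * csr A G t₂ k j) ≤ _
  refine Finset.sup_le fun k _ => ?_
  rw [show csr A G t₁ i k = Finset.univ.sup
    (fun b => mmul (Cmat A G) (mpow (Smat A G) t₁) i b * Rmat A G b k) from rfl]
  rw [fsup_mul]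
  refine Finset.sup_le fun b _ => ?_
  rw [show mmul (Cmat A G) (mpow (Smat A G) t₁) i b = Finset.univ.sup
    (fun a => Cmat A G i a * mpow (Smat A G) t₁ a b) from rfl]
  rw [fsup_mul, fsup_mul]
  refine Finset.sup_le fun a _ => ?_
  rw [show csr A G t₂ k j = Finset.univ.sup
    (fun d => mmul (Cmat A G) (mpow (Smat A G) t₂) k d * Rmat A G d j) from rfl]
  rw [mul_fsup]
  refine Finset.sup_le fun d _ => ?_
  rw [show mmul (Cmat A G) (mpow (Smat A G) t₂) k d = Finset.univ.sup
    (fun c => Cmat A G k c * mpow (Smat A G) t₂ c d) from rfl]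
  rw [fsup_mul, mul_fsup]
  refine Finset.sup_le fun c _ => ?_
  exact key_le h1 t₁ t₂ i j k a b c d

lemma part1_le (h1 : mcgm A = 1) (t₁ t₂ : ℕ) (i j : Fin n) :
    csr A G (t₁+t₂) i j ≤ mmul (csr A G t₁) (csr A G t₂) i j := by
  show (Finset.univ : Finset (Fin n)).sup
    (fun d => mmul (Cmat A G) (mpow (Smat A G) (t₁+t₂)) i d * Rmat A G d j) ≤ _
  refine Finset.sup_le fun d _ => ?_
  rw [show mmul (Cmat A G) (mpow (Smat A G) (t₁+t₂)) i d = Finset.univ.sup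
    (fun a => Cmat A G i a * mpow (Smat A G) (t₁+t₂) a d) from rfl]
  rw [fsup_mul]
  refine Finset.sup_le fun a _ => ?_
  rw [mpow_add]
  rw [show mmul (mpow (Smat A G) t₁) (mpow (Smat A G) t₂) a d = Finset.univ.sup
    (fun k => mpow (Smat A G) t₁ a k * mpow (Smat A G) t₂ k d) from rfl]
  rw [mul_fsup, fsup_mul]
  refine Finset.sup_le fun k _ => ?_
  exact key_ge h1 t₁ t₂ i j a k d

lemma keyγ_le (h1 : mcgm A = 1) (i j a d : Fin n) :
    (Cmat A G i a * mpow (Smat A G) (graphCyc G.E) a d) * Rmat A G d j ≤ csr A G 0 i j := by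
  rcases eq_or_ne ((Cmat A G i a * mpow (Smat A G) (graphCyc G.E) a d) * Rmat A G d j) 0
    with h0 | hne
  · rw [h0]; exact zero_le
  simp only [mul_ne_zero_iff] at hne
  obtain ⟨⟨hCia, hm⟩, hRdj⟩ := hne
  have hNa : G.Nc a := by by_contra h; exact hCia (by unfold Cmat; rw [if_neg h])
  have hNd : G.Nc d := by by_contra h; exact hRdj (by unfold Rmat; rw [if_neg h])
  rw [cmat_eq hNa, rmat_eq hNd]
  refine peel2 fun u v => ?_
  simp only [mpow_mul]
  set γ := graphCyc G.E with hγ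
  rcases mpow_exists A (γ*u) i a with hz | ⟨W0, hW00, hW0e, hW0w⟩
  · rw [hz]; simp only [zero_mul]; exact zero_le
  rcases mpow_exists A (γ*v) d j with hz | ⟨W3, hW30, hW3e, hW3w⟩
  · rw [hz]; simp only [mul_zero, zero_mul]; exact zero_le
  obtain ⟨W1, hW10, hW1e, hW1w⟩ := (mpow_exists (Smat A G) γ a d).resolve_left hm
  have hW1ne : wgt (Smat A G) γ W1 ≠ 0 := by rw [hW1w]; exact hm
  have hW1A : wgt A γ W1 = wgt (Smat A G) γ W1 := (wgt_A_of_smat_ne hW1ne).1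
  have hcond : W0 (γ*u) = W1 0 := by rw [hW0e, hW10]
  have hcat : wgt A (γ*u + γ) (cat (γ*u) W0 W1) = wgt A (γ*u) W0 * wgt A γ W1 :=
    wgt_cat A (γ*u) γ W0 W1 hcond
  have hCid : wgt A (γ*u) W0 * wgt (Smat A G) γ W1 ≤ Cmat A G i d := by
    rw [cmat_eq hNd, ← hW1A, ← hcat]
    have hw := walk_le_mpow A (γ*u + γ) (cat (γ*u) W0 W1)
    have h0' : cat (γ*u) W0 W1 0 = i := by
      rw [cat_left (γ*u) W0 W1 0 (Nat.zero_le _), hW00]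
    have he' : cat (γ*u) W0 W1 (γ*u + γ) = d := by
      rw [cat_right (γ*u) W0 W1 hcond γ, hW1e]
    rw [h0', he'] at hw
    refine hw.trans ?_
    rw [show γ*u + γ = γ*(u+1) by ring]
    exact pow_le_star h1 γ (u+1) i d
  have hRle : wgt A (γ*v) W3 ≤ Rmat A G d j := by
    rw [rmat_eq hNd, hW3w]
    exact pow_le_star h1 γ v d j
  rw [← hW0w, ← hW1w, ← hW3w]
  calc (wgt A (γ*u) W0 * wgt (Smat A G) γ W1) * wgt A (γ*v) W3
      = ((wgt A (γ*u) W0 * wgt (Smat A G) γ W1) * 1) * wgt A (γ*v) W3 := by ring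
    _ ≤ (Cmat A G i d * mpow (Smat A G) 0 d d) * Rmat A G d j := by
        refine mul_le_mul' (mul_le_mul' hCid ?_) hRle
        show (1:ℝ≥0) ≤ (if d = d then (1:ℝ≥0) else 0)
        rw [if_pos rfl]
    _ ≤ csr A G 0 i j := le_csr 0 i j d d

lemma keyγ_ge (h1 : mcgm A = 1) (i j a d : Fin n) :
    (Cmat A G i a * mpow (Smat A G) 0 a d) * Rmat A G d j ≤ csr A G (graphCyc G.E) i j := by
  rcases eq_or_ne ((Cmat A G i a * mpow (Smat A G) 0 a d) * Rmat A G d j) 0 with h0 | hne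
  · rw [h0]; exact zero_le
  simp only [mul_ne_zero_iff] at hne
  obtain ⟨⟨hCia, hm0⟩, hRdj⟩ := hne
  have had : a = d := by
    by_contra h
    exact hm0 (by show (if a = d then (1:ℝ≥0) else 0) = 0; rw [if_neg h])
  subst had
  have hNa : G.Nc a := by by_contra h; exact hCia (by unfold Cmat; rw [if_neg h])
  have hone : mpow (Smat A G) 0 a a = 1 := by
    show (if a = a then (1:ℝ≥0) else 0) = 1
    rw [if_pos rfl]
  rw [hone, mul_one, cmat_eq hNa, rmat_eq hNa]
  have hpeel : ∀ u v, (mpow (mpow A (graphCyc G.E)) u i a * 1)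
      * mpow (mpow A (graphCyc G.E)) v a j ≤ csr A G (graphCyc G.E) i j := by
    intro u v
    simp only [mpow_mul, mul_one]
    set γ := graphCyc G.E with hγ
    have γpos : 0 < γ := graphCyc_pos G.E
    rcases mpow_exists A (γ*u) i a with hz | ⟨W0, hW00, hW0e, hW0w⟩
    · rw [hz]; simp only [zero_mul]; exact zero_le
    rcases mpow_exists A (γ*v) a j with hz | ⟨W3, hW30, hW3e, hW3w⟩
    · rw [hz]; simp only [mul_zero]; exact zero_le
    obtain ⟨ℓ, hl, z, hz0, hzc, hzE, hzw⟩ := cycle_package h1 hNa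
    obtain ⟨ℓ', rfl⟩ : ∃ ℓ', ℓ = ℓ' + 1 := ⟨ℓ - 1, by omega⟩
    set Zp : ℕ → Fin n := fun t => z (t % (ℓ'+1)) with hZp
    have hZpE : ∀ t, G.E (Zp t) (Zp (t+1)) := by
      intro t
      show G.E (z (t % (ℓ'+1))) (z ((t+1) % (ℓ'+1)))
      rw [zp_succ hl hzc t]
      exact hzE _ (Nat.mod_lt t hl)
    have hZpS : ∀ m : ℕ, wgt (Smat A G) m Zp = wgt A m Zp := by
      intro m
      refine Finset.prod_congr rfl fun t _ => ?_
      show Smat A G (Zp t) (Zp (t+1)) = A (Zp t) (Zp (t+1))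
      unfold Smat
      rw [if_pos (hZpE t)]
    have hZpL : wgt A (γ*(ℓ'+1)) Zp = 1 := by
      rw [zp_wgt A hl hzc γ, hzw, one_pow]
    have hsplitZp : wgt A γ Zp * wgt A (γ*ℓ') (fun s => Zp (γ + s)) = 1 := by
      rw [← wgt_split, show γ + γ*ℓ' = γ*(ℓ'+1) by ring, hZpL]
    set d' := Zp γ with hd'
    have hNd' : G.Nc d' := Or.inl ⟨Zp (γ+1), hZpE γ⟩
    have hZp0 : Zp 0 = a := by
      show z (0 % (ℓ'+1)) = a
      rw [Nat.zero_mod, hz0]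
    have hO1le : wgt (Smat A G) γ Zp ≤ mpow (Smat A G) γ a d' := by
      have hw := walk_le_mpow (Smat A G) γ Zp
      rwa [hZp0] at hw
    have hcond : (fun s => Zp (γ + s)) (γ*ℓ') = W3 0 := by
      show Zp (γ + γ*ℓ') = W3 0
      rw [hW30, show γ + γ*ℓ' = γ*(ℓ'+1) by ring]
      show z ((γ*(ℓ'+1)) % (ℓ'+1)) = a
      rw [Nat.mul_mod_left, hz0]
    have hO2w : wgt A (γ*ℓ' + γ*v) (cat (γ*ℓ') (fun s => Zp (γ + s)) W3)
        = wgt A (γ*ℓ') (fun s => Zp (γ + s)) * wgt A (γ*v) W3 :=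
      wgt_cat A (γ*ℓ') (γ*v) _ W3 hcond
    have hO2le : wgt A (γ*ℓ') (fun s => Zp (γ + s)) * wgt A (γ*v) W3 ≤ Rmat A G d' j := by
      rw [rmat_eq hNd', ← hO2w]
      have hw := walk_le_mpow A (γ*ℓ' + γ*v) (cat (γ*ℓ') (fun s => Zp (γ + s)) W3)
      have h0' : cat (γ*ℓ') (fun s => Zp (γ + s)) W3 0 = d' := by
        rw [cat_left (γ*ℓ') _ W3 0 (Nat.zero_le _)]
        show Zp (γ + 0) = d'
        rw [Nat.add_zero]
      have he' : cat (γ*ℓ') (fun s => Zp (γ + s)) W3 (γ*ℓ' + γ*v) = j := by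
        rw [cat_right (γ*ℓ') _ W3 hcond (γ*v), hW3e]
      rw [h0', he'] at hw
      refine hw.trans ?_
      rw [show γ*ℓ' + γ*v = γ*(ℓ'+v) by ring]
      exact pow_le_star h1 γ (ℓ'+v) d' j
    have hC : wgt A (γ*u) W0 ≤ Cmat A G i a := by
      rw [cmat_eq hNa, hW0w]
      exact pow_le_star h1 γ u i a
    rw [← hW0w, ← hW3w]
    have hβ : wgt (Smat A G) γ Zp * wgt A (γ*ℓ') (fun s => Zp (γ + s)) = 1 := by
      rw [hZpS γ]; exact hsplitZp
    have bigEq : wgt A (γ*u) W0 * wgt A (γ*v) W3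
        = (wgt A (γ*u) W0 * wgt (Smat A G) γ Zp) *
          (wgt A (γ*ℓ') (fun s => Zp (γ + s)) * wgt A (γ*v) W3) := by
      have h3 : (wgt A (γ*u) W0 * wgt (Smat A G) γ Zp) *
          (wgt A (γ*ℓ') (fun s => Zp (γ + s)) * wgt A (γ*v) W3)
          = (wgt A (γ*u) W0 * wgt A (γ*v) W3) *
            (wgt (Smat A G) γ Zp * wgt A (γ*ℓ') (fun s => Zp (γ + s))) := by ring
      rw [h3, hβ, mul_one]
    rw [bigEq]
    calc (wgt A (γ*u) W0 * wgt (Smat A G) γ Zp) *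
          (wgt A (γ*ℓ') (fun s => Zp (γ + s)) * wgt A (γ*v) W3)
        ≤ (Cmat A G i a * mpow (Smat A G) γ a d') * Rmat A G d' j :=
          mul_le_mul' (mul_le_mul' hC hO1le) hO2le
      _ ≤ csr A G γ i j := le_csr γ i j a d'
  have := peel2 (f := fun u => mpow (mpow A (graphCyc G.E)) u i a)
    (g := fun v => mpow (mpow A (graphCyc G.E)) v a j) (s := 1)
    (c := csr A G (graphCyc G.E) i j) hpeel
  calc (⨆ u, mpow (mpow A (graphCyc G.E)) u i a) * (⨆ v, mpow (mpow A (graphCyc G.E)) v a j)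
      = ((⨆ u, mpow (mpow A (graphCyc G.E)) u i a) * 1) *
        (⨆ v, mpow (mpow A (graphCyc G.E)) v a j) := by ring
    _ ≤ csr A G (graphCyc G.E) i j := this

lemma gamma_eq (h1 : mcgm A = 1) : csr A G (graphCyc G.E) = csr A G 0 := by
  funext i j
  apply le_antisymm
  · show (Finset.univ : Finset (Fin n)).sup
      (fun d => mmul (Cmat A G) (mpow (Smat A G) (graphCyc G.E)) i d * Rmat A G d j) ≤ _
    refine Finset.sup_le fun d _ => ?_
    rw [show mmul (Cmat A G) (mpow (Smat A G) (graphCyc G.E)) i d = Finset.univ.sup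
      (fun a => Cmat A G i a * mpow (Smat A G) (graphCyc G.E) a d) from rfl]
    rw [fsup_mul]
    refine Finset.sup_le fun a _ => ?_
    exact keyγ_le h1 i j a d
  · show (Finset.univ : Finset (Fin n)).sup
      (fun d => mmul (Cmat A G) (mpow (Smat A G) 0) i d * Rmat A G d j) ≤ _
    refine Finset.sup_le fun d _ => ?_
    rw [show mmul (Cmat A G) (mpow (Smat A G) 0) i d = Finset.univ.sup
      (fun a => Cmat A G i a * mpow (Smat A G) 0 a d) from rfl]
    rw [fsup_mul]
    refine Finset.sup_le fun a _ => ?_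
    exact keyγ_ge h1 i j a d

end assembly

/-- the group law `P^(t₁+t₂) = P^(t₁) ⊗ P^(t₂)`; consequently the
CSR products form a cyclic group under `⊗` with identity `P^(0) = C ⊗ R`. -/
theorem csr_group_law {n : ℕ} (A : Fin n → Fin n → ℝ≥0) (h1 : mcgm A = 1)
    (G : CritSubgraph A) :
    (∀ t₁ t₂ : ℕ, csr A G (t₁ + t₂) = mmul (csr A G t₁) (csr A G t₂)) ∧
    (∀ t : ℕ, mmul (csr A G 0) (csr A G t) = csr A G t) ∧
    (∀ t : ℕ, ∃ s : ℕ, mmul (csr A G t) (csr A G s) = csr A G 0) := by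
  have part1 : ∀ t₁ t₂ : ℕ, csr A G (t₁ + t₂) = mmul (csr A G t₁) (csr A G t₂) := by
    intro t₁ t₂
    funext i j
    exact le_antisymm (part1_le h1 t₁ t₂ i j) (part1_ge h1 t₁ t₂ i j)
  refine ⟨part1, ?_, ?_⟩
  · intro t
    rw [← part1 0 t, Nat.zero_add]
  · intro t
    have γpos : 0 < graphCyc G.E := graphCyc_pos G.E
    have hg : csr A G (graphCyc G.E) = csr A G 0 := gamma_eq h1
    have hmul : ∀ m : ℕ, csr A G (graphCyc G.E * (m+1)) = csr A G 0 := by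
      intro m
      induction m with
      | zero => rw [Nat.mul_one]; exact hg
      | succ m ih =>
        rw [show graphCyc G.E * (m+1+1) = graphCyc G.E * (m+1) + graphCyc G.E by ring,
          part1, ih, hg, ← part1]
    refine ⟨graphCyc G.E * (t+1) - t, ?_⟩
    have ht : t + (graphCyc G.E * (t+1) - t) = graphCyc G.E * (t+1) := by
      have h2 : t + 1 ≤ graphCyc G.E * (t+1) := Nat.le_mul_of_pos_left _ γpos
      omega
    rw [← part1, ht, hmul t]

end MaxAlg
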